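/- Let G be a locally compact second countable unimodular topological group with Haar measure λ, H a complex Hilbert space, and U : G → U(H) a weakly measurable projective unitary representation (U(g)U(h) = c(g,h)U(gh) with |c(g,h)| = 1) satisfying the square integrability condition ∫_G |⟨ψ, U(g)φ⟩|² dλ(g) = d for some constant d > 0 and all unit vectors ψ, φ ∈ H. Then for all nonzero φ, ψ ∈ H there exists g ∈ G with ⟨ψ, U(g)φ⟩ ≠ 0; consequently, for every nonzero φ ∈ H the closed linear span of {U(g)φ : g ∈ G} equals H, i.e., the projective representation U is irreducible. -/

import Mathlib

open MeasureTheory Filter Topology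
open scoped ENNReal

noncomputable section

local notation "⟪" x ", " y "⟫" => @inner ℂ _ _ x y

/-- Let `G` be a locally compact second countable unimodular topological
group with Haar measure `λ`, and `U : G → U(H)` a weakly measurable projective unitary
representation satisfying the square integrability condition
`∫ |⟨ψ, U(g)φ⟩|² dλ(g) = d > 0` for all unit vectors `ψ, φ`. Then for all nonzero `φ, ψ`
there is `g` with `⟨ψ, U(g)φ⟩ ≠ 0`; consequently the closed linear span of `{U(g)φ : g ∈ G}`
is all of `H` for every nonzero `φ`, i.e. `U` is irreducible. -/
theorem stmt8 {G : Type*} [Group G] [TopologicalSpace G] [IsTopologicalGroup G]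
    [LocallyCompactSpace G] [SecondCountableTopology G]
    [MeasurableSpace G] [BorelSpace G]
    (lam : Measure G) [lam.IsHaarMeasure] [lam.IsMulRightInvariant]
    {H : Type*} [NormedAddCommGroup H] [InnerProductSpace ℂ H] [CompleteSpace H]
    (U : G → H →L[ℂ] H)
    (hUiso : ∀ (g : G) (φ : H), ‖U g φ‖ = ‖φ‖)
    (hUsurj : ∀ g : G, Function.Surjective (U g))
    (c : G → G → ℂ) (hc : ∀ g h : G, ‖c g h‖ = 1)
    (hproj : ∀ g h : G, (U g).comp (U h) = c g h • U (g * h))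
    (hwmeas : ∀ ψ φ : H, Measurable fun g => ⟪ψ, U g φ⟫)
    (d : ℝ) (hd : 0 < d)
    (hsq : ∀ ψ φ : H, ‖ψ‖ = 1 → ‖φ‖ = 1 → ∫ g, ‖⟪ψ, U g φ⟫‖ ^ 2 ∂lam = d) :
    (∀ φ ψ : H, φ ≠ 0 → ψ ≠ 0 → ∃ g : G, ⟪ψ, U g φ⟫ ≠ 0) ∧
    ∀ φ : H, φ ≠ 0 →
      (Submodule.span ℂ (Set.range fun g => U g φ)).topologicalClosure = ⊤ := by

  have key : ∀ φ ψ : H, φ ≠ 0 → ψ ≠ 0 → ∃ g : G, ⟪ψ, U g φ⟫ ≠ 0 := by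
    intro φ ψ hφ hψ
    by_contra hcon
    push_neg at hcon
    have hψn : ‖(‖ψ‖⁻¹ : ℂ) • ψ‖ = 1 := by
      rw [norm_smul]
      simp [norm_ne_zero_iff.mpr hψ]
    have hφn : ‖(‖φ‖⁻¹ : ℂ) • φ‖ = 1 := by
      rw [norm_smul]
      simp [norm_ne_zero_iff.mpr hφ]
    have h0 : ∀ g : G, ⟪(‖ψ‖⁻¹ : ℂ) • ψ, U g ((‖φ‖⁻¹ : ℂ) • φ)⟫ = 0 := by
      intro g
      rw [_root_.map_smul, inner_smul_left, inner_smul_right, hcon g]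
      ring
    have := hsq _ _ hψn hφn
    simp only [h0, norm_zero] at this
    norm_num at this
    linarith
  refine ⟨key, ?_⟩
  intro φ hφ
  rw [Submodule.topologicalClosure_eq_top_iff]
  rw [Submodule.eq_bot_iff]
  intro ψ hψ
  by_contra hψ0
  obtain ⟨g, hg⟩ := key φ ψ hφ hψ0
  apply hg
  have : ⟪U g φ, ψ⟫ = 0 := by
    exact (Submodule.mem_orthogonal _ _).1 hψ _ (Submodule.subset_span ⟨g, rfl⟩)
  rw [← inner_conj_symm, this, map_zero]
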